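/- Let A and B be n×n positive definite complex matrices. Then Tr(A + B + A♯B + A♮♮B) ≤ Tr(A + B + 2(A♮♮B)); that is, Tr(A♯B) ≤ Tr(A♮♮B). (This is the Schatten 1-norm case of the inequality ||A + B + A♯B + A♮♮B||_p ≤ ||A + B + 2(A♮♮B)||_p, since all matrices involved are positive definite.) -/

import Mathlib

open Matrix Filter ComplexOrder

variable {n : ℕ}

/-- Real power of a (Hermitian) matrix, via the continuous functional calculus. -/
noncomputable def Matrix.rpow (A : Matrix (Fin n) (Fin n) ℂ) (r : ℝ) : Matrix (Fin n) (Fin n) ℂ :=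
  cfc (fun x : ℝ => x ^ r) A

/-- The weighted matrix geometric mean `A ♯_{r,t} B = A^{r/2} (A^{-1/2} B A^{-1/2})^t A^{r/2}`.
The usual weighted geometric mean `A ♯_t B` is `Matrix.sharp A B 1 t`. -/
noncomputable def Matrix.sharp (A B : Matrix (Fin n) (Fin n) ℂ) (r t : ℝ) :
    Matrix (Fin n) (Fin n) ℂ :=
  A.rpow (r / 2) * ((A.rpow (-(1 / 2)) * B * A.rpow (-(1 / 2))).rpow t) * A.rpow (r / 2)

/-- The mean `A ♮♮ B = A^{1/2} (B^{1/2} A^{-1} B^{1/2})^{1/2} A^{1/2}`. -/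
noncomputable def Matrix.natnat (A B : Matrix (Fin n) (Fin n) ℂ) : Matrix (Fin n) (Fin n) ℂ :=
  A.rpow (1 / 2) * ((B.rpow (1 / 2) * A.rpow (-1) * B.rpow (1 / 2)).rpow (1 / 2)) * A.rpow (1 / 2)

/-- The multiset of eigenvalues of a matrix (roots of the characteristic polynomial, with
algebraic multiplicity), viewed as real numbers via the real part (intended for matrices
whose eigenvalues are all real). -/
noncomputable def Matrix.realEigs (M : Matrix (Fin n) (Fin n) ℂ) : Multiset ℝ :=
  M.charpoly.roots.map Complex.re

/-- The multiset of the moduli of the eigenvalues of a matrix. -/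
noncomputable def Matrix.absEigs (M : Matrix (Fin n) (Fin n) ℂ) : Multiset ℝ :=
  M.charpoly.roots.map (fun z => ‖z‖)

/-- The multiset of singular values of a matrix `X`, i.e. the eigenvalues of `(Xᴴ X)^{1/2}`:
the square roots of the (real, nonnegative) eigenvalues of `Xᴴ * X`. -/
noncomputable def Matrix.singVals (X : Matrix (Fin n) (Fin n) ℂ) : Multiset ℝ :=
  (Xᴴ * X).charpoly.roots.map (fun z => Real.sqrt z.re)

/-- The product of the `k` largest elements of a multiset of reals. -/
noncomputable def Multiset.prodKLargest (s : Multiset ℝ) (k : ℕ) : ℝ :=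
  ((s.sort (· ≤ ·)).drop (s.card - k)).prod

/-- The sum of the `k` largest elements of a multiset of reals. -/
noncomputable def Multiset.sumKLargest (s : Multiset ℝ) (k : ℕ) : ℝ :=
  ((s.sort (· ≤ ·)).drop (s.card - k)).sum

/-- The `j`-th largest element (`j` being `0`-indexed, so `j = 0` gives the largest) of a
multiset of reals, when the multiset has `n` elements. -/
noncomputable def Multiset.kthLargest (s : Multiset ℝ) (n j : ℕ) : ℝ :=
  (s.sort (· ≤ ·)).getD (n - 1 - j) 0

/-- `x ≺_log y` : `x` is (log-)majorized by `y` in the multiplicative sense: for every `k`,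
the product of the `k` largest entries of `x` is at most that of `y`, with equality for the
product of all entries. -/
def LogMajorize (x y : Multiset ℝ) : Prop :=
  x.card = y.card ∧ (∀ k, x.prodKLargest k ≤ y.prodKLargest k) ∧ x.prod = y.prod

section Helpers

open Matrix ComplexOrder

namespace StmtAux

variable {n : ℕ} {A B : Matrix (Fin n) (Fin n) ℂ}

lemma contOn (f : ℝ → ℝ) (A : Matrix (Fin n) (Fin n) ℂ) :
    ContinuousOn f (spectrum ℝ A) :=
  (Matrix.finite_real_spectrum (A := A)).continuousOn f

lemma spec_pos (hA : A.PosDef) : ∀ x ∈ spectrum ℝ A, 0 < x := by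
  intro x hx
  rw [Matrix.IsHermitian.spectrum_real_eq_range_eigenvalues hA.1] at hx
  obtain ⟨i, rfl⟩ := hx
  exact hA.eigenvalues_pos i

lemma rpow_herm (A : Matrix (Fin n) (Fin n) ℂ) (r : ℝ) : (A.rpow r).IsHermitian :=
  (cfc_predicate (fun x : ℝ => x ^ r) A : IsSelfAdjoint (A.rpow r))

lemma rpow_mul_rpow (hA : A.PosDef) (r s : ℝ) :
    A.rpow r * A.rpow s = A.rpow (r + s) := by
  unfold Matrix.rpow
  rw [← cfc_mul (fun x : ℝ => x ^ r) (fun x : ℝ => x ^ s) A (contOn _ A) (contOn _ A)]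
  exact cfc_congr fun x hx => (Real.rpow_add (spec_pos hA x hx) r s).symm

lemma rpow_one_eq (hA : A.PosDef) : A.rpow 1 = A := by
  unfold Matrix.rpow
  have h : (fun x : ℝ => x ^ (1 : ℝ)) = id := funext fun x => Real.rpow_one x
  rw [h]
  exact cfc_id ℝ A hA.1.isSelfAdjoint

lemma rpow_zero_eq (hA : A.PosDef) : A.rpow 0 = 1 := by
  unfold Matrix.rpow
  have h : (fun x : ℝ => x ^ (0 : ℝ)) = (1 : ℝ → ℝ) := funext fun x => Real.rpow_zero x
  rw [h]
  exact cfc_one ℝ A hA.1.isSelfAdjoint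

lemma rpow_inv_self (hA : A.PosDef) (r : ℝ) : A.rpow r * A.rpow (-r) = 1 := by
  rw [rpow_mul_rpow hA, add_neg_cancel, rpow_zero_eq hA]

lemma rpow_self_inv (hA : A.PosDef) (r : ℝ) : A.rpow (-r) * A.rpow r = 1 := by
  rw [rpow_mul_rpow hA, neg_add_cancel, rpow_zero_eq hA]

lemma mul_rpow_inv (hA : A.PosDef) : A * A.rpow (-1) = 1 := by
  nth_rewrite 1 [← rpow_one_eq hA]
  exact rpow_inv_self hA 1

lemma rpow_psd (hA : A.PosDef) (r : ℝ) : (A.rpow r).PosSemidef := by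
  have h : A.rpow (r / 2) * A.rpow (r / 2) = A.rpow r := by
    rw [rpow_mul_rpow hA, add_halves]
  have h2 := Matrix.posSemidef_conjTranspose_mul_self (A.rpow (r / 2))
  rwa [(rpow_herm A (r / 2)).eq, h] at h2

lemma posDef_conj {C Cinv : Matrix (Fin n) (Fin n) ℂ} (hA : A.PosDef)
    (hC : C.IsHermitian) (h : Cinv * C = 1) : (C * A * C).PosDef := by
  have main : (Cᴴ * A * C).PosDef := by
    refine posDef_iff_dotProduct_mulVec.mpr ⟨Matrix.isHermitian_conjTranspose_mul_mul C hA.1, fun x hx => ?_⟩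
    have hCx : C *ᵥ x ≠ 0 := by
      intro h0
      apply hx
      have := congrArg (fun v => Cinv *ᵥ v) h0
      simpa [Matrix.mulVec_mulVec, h] using this
    simpa only [star_mulVec, dotProduct_mulVec, vecMul_vecMul] using hA.dotProduct_mulVec_pos hCx
  rwa [hC.eq] at main

lemma rpow_pd (hA : A.PosDef) (r : ℝ) : (A.rpow r).PosDef := by
  have h1 : A.rpow (r / 2) * (1 : Matrix (Fin n) (Fin n) ℂ) * A.rpow (r / 2) = A.rpow r := by
    rw [mul_one, rpow_mul_rpow hA, add_halves]
  have h2 := posDef_conj (Matrix.PosDef.one) (rpow_herm A (r / 2)) (rpow_self_inv hA (r / 2))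
  rwa [h1] at h2

lemma trace_psd_nonneg (X : Matrix (Fin n) (Fin n) ℂ) : 0 ≤ (Xᴴ * X).trace := by
  rw [Matrix.trace]
  refine Finset.sum_nonneg fun j _ => ?_
  simp only [Matrix.diag_apply, Matrix.mul_apply, Matrix.conjTranspose_apply]
  exact Finset.sum_nonneg fun i _ => star_mul_self_nonneg _

lemma key_ineq (M N : Matrix (Fin n) (Fin n) ℂ)
    (h : (Mᴴ * N).trace = (Nᴴ * N).trace) :
    (Nᴴ * N).trace ≤ (Mᴴ * M).trace := by
  have h0 := trace_psd_nonneg (M - N)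
  have hNNstar : star ((Nᴴ * N).trace) = (Nᴴ * N).trace := by
    rw [← Matrix.trace_conjTranspose, Matrix.conjTranspose_mul,
      Matrix.conjTranspose_conjTranspose]
  have hNM : (Nᴴ * M).trace = (Nᴴ * N).trace := by
    calc (Nᴴ * M).trace = ((Mᴴ * N)ᴴ).trace := by
          rw [Matrix.conjTranspose_mul, Matrix.conjTranspose_conjTranspose]
      _ = star ((Mᴴ * N).trace) := Matrix.trace_conjTranspose _
      _ = (Nᴴ * N).trace := by rw [h, hNNstar]
  have expand : ((M - N)ᴴ * (M - N)).trace
      = (Mᴴ * M).trace - (Mᴴ * N).trace - (Nᴴ * M).trace + (Nᴴ * N).trace := by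
    simp only [Matrix.conjTranspose_sub, Matrix.sub_mul, Matrix.mul_sub,
      Matrix.trace_sub, Matrix.trace_add]
    ring
  rw [expand, h, hNM, sub_add_cancel] at h0
  exact sub_nonneg.mp h0

end StmtAux

end Helpers


open StmtAux in
/-- The `p = 1` case of Theorem 4.2: for positive definite `A, B`,
`Tr(A + B + A♯B + A♮♮B) ≤ Tr(A + B + 2(A♮♮B))`, i.e. `Tr(A♯B) ≤ Tr(A♮♮B)`. -/
theorem stmt_16 (A B : Matrix (Fin n) (Fin n) ℂ) (hA : A.PosDef) (hB : B.PosDef) :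
    (A + B + A.sharp B 1 (1 / 2) + A.natnat B).trace ≤
      (A + B + 2 • A.natnat B).trace := by
  set S := A.rpow (1 / 2) with hS
  set Si := A.rpow (-(1 / 2)) with hSi
  set C := B.rpow (1 / 2) with hC
  set Ci := B.rpow (-(1 / 2)) with hCi
  have hSherm : S.IsHermitian := by rw [hS]; exact rpow_herm A _
  have hSiherm : Si.IsHermitian := by rw [hSi]; exact rpow_herm A _
  have hCherm : C.IsHermitian := by rw [hC]; exact rpow_herm B _
  have hSS : S * S = A := by
    rw [hS, rpow_mul_rpow hA, (by norm_num : (1 : ℝ) / 2 + 1 / 2 = 1), rpow_one_eq hA]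
  have hSSi : S * Si = 1 := by rw [hS, hSi]; exact rpow_inv_self hA _
  have hSiS : Si * S = 1 := by rw [hS, hSi]; exact rpow_self_inv hA _
  have hSiSi : Si * Si = A.rpow (-1) := by
    rw [hSi, rpow_mul_rpow hA, (by norm_num : -((1 : ℝ) / 2) + -(1 / 2) = -1)]
  have hCC : C * C = B := by
    rw [hC, rpow_mul_rpow hB, (by norm_num : (1 : ℝ) / 2 + 1 / 2 = 1), rpow_one_eq hB]
  have hCCi : C * Ci = 1 := by rw [hC, hCi]; exact rpow_inv_self hB _
  have hCiC : Ci * C = 1 := by rw [hC, hCi]; exact rpow_self_inv hB _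
  set M0 := C * A.rpow (-1) * C with hM0def
  have hM0 : M0.PosDef := by
    rw [hM0def]; exact posDef_conj (rpow_pd hA (-1)) hCherm hCiC
  set G := M0.rpow (1 / 2) with hG
  set Gi := M0.rpow (-(1 / 2)) with hGi
  set g := M0.rpow (1 / 4) with hg
  set gi := M0.rpow (-(1 / 4)) with hgi
  have hGiherm : Gi.IsHermitian := by rw [hGi]; exact rpow_herm M0 _
  have hgherm : g.IsHermitian := by rw [hg]; exact rpow_herm M0 _
  have hgiherm : gi.IsHermitian := by rw [hgi]; exact rpow_herm M0 _
  have hGipsd : Gi.PosSemidef := by rw [hGi]; exact rpow_psd hM0 _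
  have hgg : g * g = G := by
    rw [hg, hG, rpow_mul_rpow hM0, (by norm_num : (1 : ℝ) / 4 + 1 / 4 = 1 / 2)]
  have hgigi : gi * gi = Gi := by
    rw [hgi, hGi, rpow_mul_rpow hM0, (by norm_num : -((1 : ℝ) / 4) + -(1 / 4) = -(1 / 2))]
  have hgig : gi * g = 1 := by rw [hg, hgi]; exact rpow_self_inv hM0 _
  have hGiGi : Gi * Gi = M0.rpow (-1) := by
    rw [hGi, rpow_mul_rpow hM0, (by norm_num : -((1 : ℝ) / 2) + -(1 / 2) = -1)]
  have hGMG : Gi * M0 * Gi = 1 := by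
    rw [hGi]
    nth_rewrite 2 [← rpow_one_eq hM0]
    rw [rpow_mul_rpow hM0, rpow_mul_rpow hM0,
      (by norm_num : -((1 : ℝ) / 2) + 1 + -(1 / 2) = 0), rpow_zero_eq hM0]
  have hinner : (C * Gi * C) * A.rpow (-1) * (C * Gi * C) = B := by
    have h1 : (C * Gi * C) * A.rpow (-1) * (C * Gi * C)
        = C * (Gi * (C * A.rpow (-1) * C) * Gi) * C := by
      simp only [Matrix.mul_assoc]
    rw [h1, ← hM0def, hGMG, mul_one, hCC]
  set P := Si * B * Si with hPdef
  have hP : P.PosDef := by rw [hPdef]; exact posDef_conj hB hSiherm hSSi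
  have hN'psd : (Si * (C * Gi * C) * Si).PosSemidef := by
    have h1 : (C * Gi * Cᴴ).PosSemidef := hGipsd.mul_mul_conjTranspose_same C
    rw [hCherm.eq] at h1
    have h2 := h1.mul_mul_conjTranspose_same Si
    rwa [hSiherm.eq] at h2
  have claim1 : P.rpow (1 / 2) = Si * (C * Gi * C) * Si := by
    open scoped MatrixOrder Matrix.Norms.L2Operator in
    refine (CFC.sq_eq_sq_iff (A := Matrix (Fin n) (Fin n) ℂ) _ _ (rpow_psd hP (1 / 2)).nonneg hN'psd.nonneg).mp ?_
    rw [pow_two, pow_two]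
    have hL : P.rpow (1 / 2) * P.rpow (1 / 2) = P := by
      rw [rpow_mul_rpow hP, (by norm_num : (1 : ℝ) / 2 + 1 / 2 = 1), rpow_one_eq hP]
    have hr : (Si * (C * Gi * C) * Si) * (Si * (C * Gi * C) * Si)
        = Si * ((C * Gi * C) * (Si * Si) * (C * Gi * C)) * Si := by
      simp only [Matrix.mul_assoc]
    rw [hL, hr, hSiSi, hinner, hPdef]
  have hsharp : A.sharp B 1 (1 / 2) = C * Gi * C := by
    have h1 : A.sharp B 1 (1 / 2) = S * P.rpow (1 / 2) * S := by
      simp only [Matrix.sharp]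
      rfl
    rw [h1, claim1]
    have h2 : S * (Si * (C * Gi * C) * Si) * S = (S * Si) * (C * Gi * C) * (Si * S) := by
      simp only [Matrix.mul_assoc]
    rw [h2, hSSi, hSiS, one_mul, mul_one]
  have hnn : A.natnat B = S * G * S := by
    simp only [Matrix.natnat]
    rfl
  have claim2 : C * M0.rpow (-1) * C = A := by
    have hx : (Ci * A * Ci) * M0 = 1 := by
      rw [hM0def]
      have h1 : (Ci * A * Ci) * (C * A.rpow (-1) * C)
          = Ci * A * (Ci * C) * A.rpow (-1) * C := by
        simp only [Matrix.mul_assoc]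
      rw [h1, hCiC, mul_one]
      have h2 : Ci * A * A.rpow (-1) * C = Ci * (A * A.rpow (-1)) * C := by
        simp only [Matrix.mul_assoc]
      rw [h2, mul_rpow_inv hA, mul_one, hCiC]
    have hMMi : M0 * M0.rpow (-1) = 1 := mul_rpow_inv hM0
    have hRi : M0.rpow (-1) = Ci * A * Ci := by
      calc M0.rpow (-1) = 1 * M0.rpow (-1) := (one_mul _).symm
        _ = Ci * A * Ci * M0 * M0.rpow (-1) := by rw [hx]
        _ = Ci * A * Ci * (M0 * M0.rpow (-1)) := by rw [Matrix.mul_assoc]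
        _ = Ci * A * Ci := by rw [hMMi, mul_one]
    rw [hRi]
    have h3 : C * (Ci * A * Ci) * C = (C * Ci) * A * (Ci * C) := by
      simp only [Matrix.mul_assoc]
    rw [h3, hCCi, hCiC, one_mul, mul_one]
  have hMmH : (Gi * C * g)ᴴ = g * C * Gi := by
    rw [Matrix.conjTranspose_mul, Matrix.conjTranspose_mul, hgherm.eq, hCherm.eq, hGiherm.eq]
    simp only [Matrix.mul_assoc]
  have hNnH : (C * gi)ᴴ = gi * C := by
    rw [Matrix.conjTranspose_mul, hgiherm.eq, hCherm.eq]
  have t_sh1 : ((C * gi)ᴴ * (C * gi)).trace = (C * Gi * C).trace := by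
    rw [hNnH]
    have e1 : (gi * C) * (C * gi) = gi * B * gi := by
      have h : (gi * C) * (C * gi) = gi * (C * C) * gi := by simp only [Matrix.mul_assoc]
      rw [h, hCC]
    have e2 : (C * Gi * C).trace = (B * Gi).trace := by
      rw [Matrix.trace_mul_cycle, hCC]
    rw [e1, Matrix.trace_mul_cycle, hgigi, e2, Matrix.trace_mul_comm]
  have t_MN : ((Gi * C * g)ᴴ * (C * gi)).trace = (C * Gi * C).trace := by
    rw [hMmH]
    have e : (g * C * Gi) * (C * gi) = g * (C * Gi * C) * gi := by
      simp only [Matrix.mul_assoc]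
    rw [e, Matrix.trace_mul_cycle, hgig, one_mul]
  have t_MM : ((Gi * C * g)ᴴ * (Gi * C * g)).trace = (S * G * S).trace := by
    rw [hMmH]
    have e : (g * C * Gi) * (Gi * C * g) = g * (C * (Gi * Gi) * C) * g := by
      simp only [Matrix.mul_assoc]
    rw [e, hGiGi, claim2]
    have e2 : (S * G * S).trace = (A * G).trace := by
      rw [Matrix.trace_mul_cycle, hSS]
    rw [Matrix.trace_mul_cycle, hgg, e2, Matrix.trace_mul_comm]
  have hmain : (A.sharp B 1 (1 / 2)).trace ≤ (A.natnat B).trace := by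
    rw [hsharp, hnn, ← t_sh1, ← t_MM]
    exact key_ineq _ _ (t_MN.trans t_sh1.symm)
  rw [two_smul]
  simp only [Matrix.trace_add]
  exact le_of_le_of_eq (add_le_add_left (add_le_add_right hmain _) _) (add_assoc _ _ _)
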